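/- Let X ⊆ ℝ^n be a nonempty closed convex set. Then a ball of every radius R > 0 rolls freely in the closure of the complement of X: for every x ∈ ∂X there exists a point a such that x ∈ B(a, R) ⊆ closure(Xᶜ). -/

import Mathlib

open Metric

open scoped RealInnerProductSpace

/-- For a nonempty closed convex set `X ⊆ ℝ^n`, a ball of every radius `R > 0` rolls
freely in the closure of the complement of `X`. -/
theorem stmt5 (n : ℕ) (X : Set (EuclideanSpace ℝ (Fin n)))
    (hXne : X.Nonempty) (hXcl : IsClosed X) (hXconv : Convex ℝ X) :
    ∀ R > (0 : ℝ), ∀ x ∈ frontier X, ∃ a,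
      x ∈ closedBall a R ∧ closedBall a R ⊆ closure Xᶜ := by
  intro R hR x hx
  have hxX : x ∈ X := hXcl.frontier_subset hx
  have hxc : x ∈ closure Xᶜ := by
    rw [frontier_eq_closure_inter_closure] at hx
    exact hx.2
  obtain ⟨u, hu, hulim⟩ := mem_closure_iff_seq_limit.mp hxc
  -- projections of u k onto X
  have hproj : ∀ k, ∃ p ∈ X, ‖u k - p‖ = ⨅ w : X, ‖u k - w‖ := fun k =>
    exists_norm_eq_iInf_of_complete_convex hXne hXcl.isComplete hXconv (u k)
  choose p hpX hpd using hproj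
  have hpineq : ∀ k, ∀ w ∈ X, ⟪u k - p k, w - p k⟫ ≤ 0 := fun k =>
    (norm_eq_iInf_iff_real_inner_le_zero hXconv (hpX k)).mp (hpd k)
  have hne : ∀ k, u k - p k ≠ 0 := by
    intro k h
    exact hu k ((sub_eq_zero.mp h) ▸ hpX k)
  have hle : ∀ k, ‖u k - p k‖ ≤ ‖u k - x‖ := by
    intro k
    rw [hpd k]
    exact ciInf_le ⟨0, by rintro r ⟨w, rfl⟩; positivity⟩ (⟨x, hxX⟩ : X)
  have hux : Filter.Tendsto (fun k => ‖u k - x‖) Filter.atTop (nhds 0) :=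
    tendsto_iff_norm_sub_tendsto_zero.mp hulim
  have hp_lim : Filter.Tendsto p Filter.atTop (nhds x) := by
    rw [tendsto_iff_norm_sub_tendsto_zero]
    have h0 : Filter.Tendsto (fun k => 2 * ‖u k - x‖) Filter.atTop (nhds 0) := by
      simpa using hux.const_mul 2
    refine squeeze_zero (fun k => norm_nonneg _) (fun k => ?_) h0
    calc ‖p k - x‖ ≤ ‖p k - u k‖ + ‖u k - x‖ := norm_sub_le_norm_sub_add_norm_sub _ _ _
      _ ≤ ‖u k - x‖ + ‖u k - x‖ := by
          rw [norm_sub_rev]; exact add_le_add_left (hle k) _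
      _ = 2 * ‖u k - x‖ := by ring
  set v : ℕ → EuclideanSpace ℝ (Fin n) := fun k => ‖u k - p k‖⁻¹ • (u k - p k) with hv
  have hvs : ∀ k, v k ∈ sphere (0 : EuclideanSpace ℝ (Fin n)) 1 := by
    intro k
    rw [mem_sphere_zero_iff_norm]
    exact norm_smul_inv_norm (hne k)
  obtain ⟨w, hws, φ, hφ, hwt⟩ := (isCompact_sphere (0 : EuclideanSpace ℝ (Fin n)) 1).tendsto_subseq hvs
  have hwnorm : ‖w‖ = 1 := mem_sphere_zero_iff_norm.mp hws
  have hsupp : ∀ z ∈ X, ⟪w, z - x⟫ ≤ 0 := by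
    intro z hz
    have htend : Filter.Tendsto (fun k => ⟪v (φ k), z - p (φ k)⟫) Filter.atTop
        (nhds ⟪w, z - x⟫) :=
      hwt.inner (Filter.Tendsto.const_sub z (hp_lim.comp hφ.tendsto_atTop))
    refine le_of_tendsto htend (Filter.Eventually.of_forall fun k => ?_)
    have : ⟪v (φ k), z - p (φ k)⟫ = ‖u (φ k) - p (φ k)‖⁻¹ * ⟪u (φ k) - p (φ k), z - p (φ k)⟫ := by
      simp only [hv]
      exact real_inner_smul_left _ _ _
    rw [this]
    exact mul_nonpos_of_nonneg_of_nonpos (by positivity) (hpineq (φ k) z hz)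
  refine ⟨x + R • w, ?_, ?_⟩
  · simp [mem_closedBall, dist_eq_norm, norm_smul, abs_of_pos hR, hwnorm, le_refl]
  · have hball : ball (x + R • w) R ⊆ Xᶜ := by
      intro z hz hzX
      have h1 : ⟪z - x, w⟫ ≤ 0 := by
        rw [real_inner_comm]; exact hsupp z hzX
      have h2 : ‖z - (x + R • w)‖ < R := by
        rwa [mem_ball, dist_eq_norm] at hz
      have h3 : ‖z - (x + R • w)‖ ^ 2 = ‖z - x‖ ^ 2 - 2 * ⟪z - x, R • w⟫ + ‖R • w‖ ^ 2 := by
        rw [← norm_sub_sq_real, sub_sub]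
      have h4 : ⟪z - x, R • w⟫ = R * ⟪z - x, w⟫ := real_inner_smul_right _ _ _
      have h5 : ‖R • w‖ ^ 2 = R ^ 2 := by
        rw [norm_smul, hwnorm]; simp [abs_of_pos hR]
      have h6 : ‖z - (x + R • w)‖ ^ 2 < R ^ 2 := by
        have := norm_nonneg (z - (x + R • w))
        nlinarith
      nlinarith [sq_nonneg (‖z - x‖), mul_nonpos_of_nonneg_of_nonpos hR.le h1]
    calc closedBall (x + R • w) R = closure (ball (x + R • w) R) :=
          (closure_ball _ (ne_of_gt hR)).symm
      _ ⊆ closure Xᶜ := closure_mono hball
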